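/- Let x ∈ R^n be nonzero and y ∈ R^n. Let Z be the random variable taking value y_i/x_i with probability x_i²/‖x‖² (over indices i with x_i ≠ 0). Then E[Z] = ⟨x,y⟩/‖x‖² and Var[Z] ≤ ‖y‖²/‖x‖². -/

import Mathlib

open RealInnerProductSpace

theorem stmt_3 {n : ℕ} (x y : EuclideanSpace ℝ (Fin n)) (hx : x ≠ 0) :
    (∑ i, (x i ^ 2 / ‖x‖ ^ 2) * (if x i ≠ 0 then y i / x i else 0)) = ⟪x, y⟫ / ‖x‖ ^ 2 ∧
    (∑ i, (x i ^ 2 / ‖x‖ ^ 2) *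
        ((if x i ≠ 0 then y i / x i else 0) - ⟪x, y⟫ / ‖x‖ ^ 2) ^ 2)
      ≤ ‖y‖ ^ 2 / ‖x‖ ^ 2 := by
  have hx0 : (0:ℝ) < ‖x‖ := norm_pos_iff.mpr hx
  have hn : (0:ℝ) < ‖x‖ ^ 2 := by positivity
  have hn' : (‖x‖:ℝ) ^ 2 ≠ 0 := ne_of_gt hn
  have hinner : ⟪x, y⟫ = ∑ i, x i * y i := by
    simp [PiLp.inner_apply, RCLike.inner_apply, mul_comm]
  have hxx : ∑ i, x i ^ 2 = ‖x‖ ^ 2 := by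
    have := real_inner_self_eq_norm_sq x
    simp [PiLp.inner_apply, RCLike.inner_apply] at this
    rw [EuclideanSpace.norm_sq_eq]; simp [Real.norm_eq_abs, sq_abs]
  have hyy : ∑ i, y i ^ 2 = ‖y‖ ^ 2 := by
    have := real_inner_self_eq_norm_sq y
    simp [PiLp.inner_apply, RCLike.inner_apply] at this
    rw [EuclideanSpace.norm_sq_eq]; simp [Real.norm_eq_abs, sq_abs]
  have hT : ∑ i, x i ^ 2 / ‖x‖ ^ 2 = 1 := by
    rw [← Finset.sum_div, hxx, div_self hn']
  have hS : (∑ i, (x i ^ 2 / ‖x‖ ^ 2) * (if x i ≠ 0 then y i / x i else 0))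
      = ⟪x, y⟫ / ‖x‖ ^ 2 := by
    rw [hinner, Finset.sum_div]
    refine Finset.sum_congr rfl fun i _ => ?_
    by_cases h : x i = 0
    · simp [h]
    · rw [if_pos h]
      field_simp
  refine ⟨hS, ?_⟩
  set μ := ⟪x, y⟫ / ‖x‖ ^ 2 with hμ
  have hQ : (∑ i, (x i ^ 2 / ‖x‖ ^ 2) * (if x i ≠ 0 then y i / x i else 0) ^ 2)
      ≤ ‖y‖ ^ 2 / ‖x‖ ^ 2 := by
    rw [← hyy, Finset.sum_div]
    refine Finset.sum_le_sum fun i _ => ?_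
    by_cases h : x i = 0
    · simp [h]
      positivity
    · rw [if_pos h]
      have heq : x i ^ 2 / ‖x‖ ^ 2 * (y i / x i) ^ 2 = y i ^ 2 / ‖x‖ ^ 2 := by
        field_simp
      rw [heq]
  have expand : (∑ i, (x i ^ 2 / ‖x‖ ^ 2) *
        ((if x i ≠ 0 then y i / x i else 0) - μ) ^ 2)
      = (∑ i, (x i ^ 2 / ‖x‖ ^ 2) * (if x i ≠ 0 then y i / x i else 0) ^ 2) - μ ^ 2 := by
    have : ∀ i, (x i ^ 2 / ‖x‖ ^ 2) * ((if x i ≠ 0 then y i / x i else 0) - μ) ^ 2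
        = (x i ^ 2 / ‖x‖ ^ 2) * (if x i ≠ 0 then y i / x i else 0) ^ 2
          - 2 * μ * ((x i ^ 2 / ‖x‖ ^ 2) * (if x i ≠ 0 then y i / x i else 0))
          + μ ^ 2 * (x i ^ 2 / ‖x‖ ^ 2) := fun i => by ring
    simp_rw [this]
    rw [Finset.sum_add_distrib, Finset.sum_sub_distrib, ← Finset.mul_sum, ← Finset.mul_sum,
      hS, hT]
    ring
  rw [expand]
  nlinarith [sq_nonneg μ]
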